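/- Let $f, g \in \mathbb{C}[X_1,\ldots,X_n]$ be algebraically independent polynomials whose leading forms $\bar f, \bar g$ are also algebraically independent, with $\deg f < \deg g$. Then for every $G \in \mathbb{C}[X,Y]$, $\deg G(f,g) \geq \deg_Y G \cdot \deg g$. -/

import Mathlib

open MvPolynomial

lemma aux_degree_add {σ : Type*} (u v : σ →₀ ℕ) :
    (u + v).degree = u.degree + v.degree := by
  simp [Finsupp.degree_eq_weight_one, map_add]

lemma aux_coeff_zero_of_lt {σ : Type*} {p : MvPolynomial σ ℂ} {d : σ →₀ ℕ}
    (h : p.totalDegree < d.degree) : coeff d p = 0 :=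
  coeff_eq_zero_of_totalDegree_lt h

lemma hc_mul_of_le {σ : Type*} (p q : MvPolynomial σ ℂ) {a b : ℕ}
    (ha : p.totalDegree ≤ a) (hb : q.totalDegree ≤ b) :
    homogeneousComponent (a + b) (p * q) =
      homogeneousComponent a p * homogeneousComponent b q := by
  classical
  ext m
  rw [coeff_homogeneousComponent]
  split_ifs with hm
  · rw [coeff_mul, coeff_mul]
    refine Finset.sum_congr rfl fun x hx => ?_
    rw [Finset.HasAntidiagonal.mem_antidiagonal] at hx
    have hdeg : x.1.degree + x.2.degree = a + b := by
      rw [← hm, ← hx, aux_degree_add]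
    rw [coeff_homogeneousComponent, coeff_homogeneousComponent]
    by_cases h1 : x.1.degree = a
    · have h2 : x.2.degree = b := by omega
      rw [if_pos h1, if_pos h2]
    · rcases lt_or_gt_of_ne h1 with hlt | hgt
      · have h2 : b < x.2.degree := by omega
        rw [if_neg h1, aux_coeff_zero_of_lt (lt_of_le_of_lt hb h2), mul_zero, zero_mul]
      · rw [if_neg h1, aux_coeff_zero_of_lt (lt_of_le_of_lt ha hgt), zero_mul, zero_mul]
  · exact (((homogeneousComponent_isHomogeneous a p).mul
      (homogeneousComponent_isHomogeneous b q)).coeff_eq_zero hm).symm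

lemma hc_pow_of_le {σ : Type*} (p : MvPolynomial σ ℂ) {a : ℕ}
    (ha : p.totalDegree ≤ a) (i : ℕ) :
    homogeneousComponent (i * a) (p ^ i) = (homogeneousComponent a p) ^ i := by
  induction i with
  | zero => simp
  | succ k ih =>
    have h1 : (p ^ k).totalDegree ≤ k * a :=
      le_trans (totalDegree_pow p k) (by exact Nat.mul_le_mul_left k ha)
    have : (k + 1) * a = a + k * a := by ring
    rw [this, pow_succ, mul_comm (p ^ k) p, hc_mul_of_le p (p ^ k) ha h1, ih,
      pow_succ, mul_comm]

theorem deg_subst_ge_of_leading_indep (n : ℕ) (f g : MvPolynomial (Fin n) ℂ)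
    (hind : AlgebraicIndependent ℂ ![f, g])
    (hlead : AlgebraicIndependent ℂ
      ![homogeneousComponent f.totalDegree f, homogeneousComponent g.totalDegree g])
    (hdeg : f.totalDegree < g.totalDegree)
    (G : MvPolynomial (Fin 2) ℂ) :
    G.degreeOf 1 * g.totalDegree ≤ (aeval ![f, g] G).totalDegree := by
  classical
  by_cases hG : G = 0
  · simp [hG]
  set df := f.totalDegree with hdf
  set dg := g.totalDegree with hdg
  set fb := homogeneousComponent df f with hfb
  set gb := homogeneousComponent dg g with hgb
  set w : (Fin 2 →₀ ℕ) → ℕ := fun d => d 0 * df + d 1 * dg with hw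
  set W := G.support.sup w with hW
  have hsupp : G.support.Nonempty := support_nonempty.mpr hG
  -- the weighted leading part of G
  set G' : MvPolynomial (Fin 2) ℂ :=
    ∑ d ∈ G.support.filter (fun d => w d = W), monomial d (coeff d G) with hG'
  -- expansion of aeval
  have hterm : ∀ d : Fin 2 →₀ ℕ,
      (aeval ![f, g] : MvPolynomial (Fin 2) ℂ →ₐ[ℂ] MvPolynomial (Fin n) ℂ)
        (monomial d (coeff d G)) = C (coeff d G) * (f ^ d 0 * g ^ d 1) := by
    intro d
    rw [aeval_monomial, Finsupp.prod_pow, Fin.prod_univ_two]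
    simp [algebraMap_eq]
  have hdegterm : ∀ d : Fin 2 →₀ ℕ, (f ^ d 0 * g ^ d 1).totalDegree ≤ w d := by
    intro d
    refine le_trans (totalDegree_mul _ _) (add_le_add ?_ ?_)
    · exact le_trans (totalDegree_pow f _) (by rw [mul_comm])
    · exact le_trans (totalDegree_pow g _) (by rw [mul_comm])
  -- the key computation
  have hkey : homogeneousComponent W ((aeval ![f, g]) G) = (aeval ![fb, gb]) G' := by
    conv_lhs => rw [as_sum G]
    rw [map_sum, map_sum]
    rw [hG', map_sum]
    rw [← Finset.sum_filter_add_sum_filter_not G.support (fun d => w d = W)]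
    have hzero : ∑ d ∈ G.support.filter (fun d => ¬ w d = W),
        homogeneousComponent W ((aeval ![f, g]) (monomial d (coeff d G))) = 0 := by
      refine Finset.sum_eq_zero fun d hd => ?_
      rw [Finset.mem_filter] at hd
      have hlt : w d < W := lt_of_le_of_ne (Finset.le_sup (f := w) hd.1) hd.2
      rw [hterm d]
      apply homogeneousComponent_eq_zero
      calc (C (coeff d G) * (f ^ d 0 * g ^ d 1)).totalDegree
          ≤ 0 + (f ^ d 0 * g ^ d 1).totalDegree := by
            refine le_trans (totalDegree_mul _ _) (add_le_add ?_ le_rfl)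
            simp [totalDegree_C]
        _ ≤ w d := by simpa using hdegterm d
        _ < W := hlt
    rw [hzero, add_zero]
    refine Finset.sum_congr rfl fun d hd => ?_
    rw [Finset.mem_filter] at hd
    rw [hterm d, homogeneousComponent_C_mul]
    have hWd : W = d 0 * df + d 1 * dg := hd.2.symm
    rw [hWd, hc_mul_of_le (f ^ d 0) (g ^ d 1)
        (le_trans (totalDegree_pow f _) (by rw [mul_comm]))
        (le_trans (totalDegree_pow g _) (by rw [mul_comm])),
      hc_pow_of_le f le_rfl, hc_pow_of_le g le_rfl]
    rw [aeval_monomial, Finsupp.prod_pow, Fin.prod_univ_two]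
    simp [algebraMap_eq, hfb, hgb, hdf, hdg]
  -- G' is nonzero
  have hG'ne : G' ≠ 0 := by
    obtain ⟨d0, hd0, hd0w⟩ := Finset.exists_mem_eq_sup G.support hsupp w
    have hcoeff : coeff d0 G' = coeff d0 G := by
      rw [hG', MvPolynomial.coeff_sum]
      rw [Finset.sum_eq_single d0 (fun d _ hne => by rw [coeff_monomial, if_neg hne])
        (fun habs => absurd (Finset.mem_filter.mpr ⟨hd0, hd0w.symm⟩) habs)]
      rw [coeff_monomial, if_pos rfl]
    intro h0
    rw [h0, coeff_zero] at hcoeff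
    exact (mem_support_iff.mp hd0) hcoeff.symm
  have hinj : Function.Injective
      (aeval ![fb, gb] : MvPolynomial (Fin 2) ℂ →ₐ[ℂ] MvPolynomial (Fin n) ℂ) := hlead
  have hne : homogeneousComponent W ((aeval ![f, g]) G) ≠ 0 := by
    rw [hkey]
    intro h
    exact hG'ne (hinj (by rw [h, map_zero]))
  have hWle : W ≤ ((aeval ![f, g]) G).totalDegree := by
    by_contra hlt
    exact hne (homogeneousComponent_eq_zero _ _ (not_le.mp hlt))
  obtain ⟨d1, hd1, hd1e⟩ := Finset.exists_mem_eq_sup G.support hsupp (fun d => d 1)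
  have hdeg1 : G.degreeOf 1 = d1 1 := by rw [degreeOf_eq_sup]; exact hd1e
  calc G.degreeOf 1 * dg = d1 1 * dg := by rw [hdeg1]
    _ ≤ w d1 := Nat.le_add_left _ _
    _ ≤ W := Finset.le_sup hd1
    _ ≤ _ := hWle
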